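/- arXiv:2303.17700 — 2 statements merged into one kernel-verified Lean document; each statement's English description precedes it below -/
import Mathlib

section
/- For every vector φ ∈ ℂ², the identity φ ⊗ Φ⁺ = (1/2)·Σ_{x,z ∈ ZMod 2} ((Zᶻ·Xˣ ⊗ id)Φ⁺) ⊗ (Xˣ·Zᶻ·φ) holds in ℂ² ⊗ ℂ² ⊗ ℂ², where matrix powers use the natural-number representatives of x,z ∈ ZMod 2. (This is the computational content of the single-qubit teleportation protocol using Ising anyons: measuring the first two tensor factors in the basis {(ZᶻXˣ⊗id)Φ⁺} with outcome (x,z) leaves the third factor in state XˣZᶻφ, each outcome occurring with probability 1/4 when φ is a unit vector.) -/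
noncomputable section
open Matrix

/-- The Pauli-X matrix. -/
def PX : Matrix (Fin 2) (Fin 2) ℂ := !![0, 1; 1, 0]

/-- The Pauli-Z matrix. -/
def PZ : Matrix (Fin 2) (Fin 2) ℂ := !![1, 0; 0, -1]

/-- The standard basis of `ℂ²`. -/
def e (i : Fin 2) : Fin 2 → ℂ := Pi.single i 1

/-- Tensor product of two vectors of `ℂ²`, as a vector of `ℂ² ⊗ ℂ²`. -/
def tensQQ (v w : Fin 2 → ℂ) : Fin 2 × Fin 2 → ℂ := fun p => v p.1 * w p.2

/-- Tensor product of a 1-qubit vector (first factor) with a 2-qubit vector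
(second and third factors), as a vector of `ℂ² ⊗ ℂ² ⊗ ℂ²`. -/
def tensQ_QQ (v : Fin 2 → ℂ) (w : Fin 2 × Fin 2 → ℂ) : Fin 2 × Fin 2 × Fin 2 → ℂ :=
  fun p => v p.1 * w p.2

/-- Tensor product of a 2-qubit vector (first and second factors) with a 1-qubit
vector (third factor), as a vector of `ℂ² ⊗ ℂ² ⊗ ℂ²`. -/
def tensQQ_Q (w : Fin 2 × Fin 2 → ℂ) (v : Fin 2 → ℂ) : Fin 2 × Fin 2 × Fin 2 → ℂ :=
  fun p => w (p.1, p.2.1) * v p.2.2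

/-- The action of `A ⊗ id` on `ℂ² ⊗ ℂ²`. -/
def actL (A : Matrix (Fin 2) (Fin 2) ℂ) (w : Fin 2 × Fin 2 → ℂ) : Fin 2 × Fin 2 → ℂ :=
  fun p => ∑ k, A p.1 k * w (k, p.2)

/-- The ebit (maximally entangled 2-qubit state) `Φ⁺ = (e₀⊗e₀ + e₁⊗e₁)/√2`. -/
def BellPhi : Fin 2 × Fin 2 → ℂ :=
  ((Real.sqrt 2 : ℂ))⁻¹ • (tensQQ (e 0) (e 0) + tensQQ (e 1) (e 1))

/-- Single-qubit teleportation identity: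
`φ ⊗ Φ⁺ = (1/2)·Σ_{x,z} ((Zᶻ Xˣ ⊗ id) Φ⁺) ⊗ (Xˣ Zᶻ φ)`. -/
theorem teleportation_qubit (φ : Fin 2 → ℂ) :
    tensQ_QQ φ BellPhi =
      (1 / 2 : ℂ) • ∑ x : ZMod 2, ∑ z : ZMod 2,
        tensQQ_Q (actL (PZ ^ z.val * PX ^ x.val) BellPhi)
          ((PX ^ x.val * PZ ^ z.val).mulVec φ) := by
  funext p
  obtain ⟨a, b, c⟩ := p
  have h2 : ((Real.sqrt 2 : ℂ))⁻¹ * ((Real.sqrt 2 : ℂ))⁻¹ = 2⁻¹ := by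
    rw [← mul_inv, ← Complex.ofReal_mul, Real.mul_self_sqrt (by norm_num)]
    norm_num
  simp only [tensQ_QQ, tensQQ_Q, actL, BellPhi, tensQQ, e, PX, PZ,
    Fin.sum_univ_two, Finset.sum_apply, Pi.smul_apply, Pi.add_apply, smul_eq_mul]
  show _ = (1/2 : ℂ) * ∑ x : Fin 2, ∑ z : Fin 2, _
  simp only [Fin.sum_univ_two]
  fin_cases a <;> fin_cases b <;> fin_cases c <;>
    simp [ZMod.val, Fin.sum_univ_two, Pi.single_apply, pow_succ, pow_zero,
      Matrix.mul_apply, Matrix.mulVec, dotProduct, Matrix.one_apply] <;>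
    ring_nf
end
end

section
/- For p ≥ 1 and x : {1,…,p} → ZMod 2 with x_{p+1} := 0, the product of vertex operators satisfies ∏_{j=1}^{p} v_j^{x_j} = ⨂_{k=0}^{p} X^{c_k}, where c_0 = x_1 and c_k = x_k + x_{k+1} (addition in ZMod 2) for 1 ≤ k ≤ p. (This is the content of the 'noughts and crosses' model: applying the vertex operators prescribed by Alice's measurement outcomes produces exactly the pattern of X-errors with exponents x_j + x_{j+1}, together with an X^{x_1} on the ancillary site 0.) -/
noncomputable section
open Matrix
open scoped Classical

/-- The operator on `(ℂ²)^{⊗(p+1)}` (sites `0,…,p`) acting as the 2×2 matrix `A`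
on site `k` and as the identity elsewhere. -/
def site (p : ℕ) (A : Matrix (Fin 2) (Fin 2) ℂ) (k : Fin (p + 1)) :
    Matrix (Fin (p + 1) → Fin 2) (Fin (p + 1) → Fin 2) ℂ :=
  fun s t => (if ∀ j, j ≠ k → s j = t j then 1 else 0) * A (s k) (t k)

/-- The tensor (Kronecker) product `⨂_{k=0}^{p} M k` of single-site operators,
as an operator on `(ℂ²)^{⊗(p+1)}`. -/
def kron (p : ℕ) (M : Fin (p + 1) → Matrix (Fin 2) (Fin 2) ℂ) :
    Matrix (Fin (p + 1) → Fin 2) (Fin (p + 1) → Fin 2) ℂ :=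
  fun s t => ∏ k, M k (s k) (t k)

/-- The vertex operator `v_j := X_{j-1} · X_j` for `1 ≤ j ≤ p`; here `j : Fin p`
represents the vertex `j+1 ∈ {1,…,p}`, acting on sites `j` and `j+1`. -/
def vop (p : ℕ) (j : Fin p) :
    Matrix (Fin (p + 1) → Fin 2) (Fin (p + 1) → Fin 2) ℂ :=
  site p PX j.castSucc * site p PX j.succ

lemma PX_sq : PX * PX = 1 := by
  rw [PX, Matrix.mul_fin_two, Matrix.one_fin_two]
  norm_num

lemma PX_pow_mod (n : ℕ) : PX ^ n = PX ^ (n % 2) := by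
  conv_lhs => rw [← Nat.div_add_mod n 2]
  rw [pow_add, pow_mul, pow_two, PX_sq, one_pow, one_mul]

lemma kron_mul (p : ℕ) (M N : Fin (p + 1) → Matrix (Fin 2) (Fin 2) ℂ) :
    kron p M * kron p N = kron p (fun k => M k * N k) := by
  funext s t
  simp only [kron, Matrix.mul_apply, ← Finset.prod_mul_distrib]
  rw [Fintype.prod_sum]

lemma kron_one (p : ℕ) : kron p (fun _ => (1 : Matrix (Fin 2) (Fin 2) ℂ)) = 1 := by
  funext s t
  simp only [kron, Matrix.one_apply]
  rw [Finset.prod_boole]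
  simp [funext_iff]

lemma site_eq_kron (p : ℕ) (A : Matrix (Fin 2) (Fin 2) ℂ) (k : Fin (p + 1)) :
    site p A k = kron p (fun i => if i = k then A else 1) := by
  funext s t
  simp only [site, kron]
  rw [Finset.prod_eq_mul_prod_sdiff_singleton_of_mem (Finset.mem_univ k)]
  have h1 : ∀ i ∈ Finset.univ \ {k},
      (if i = k then A else 1) (s i) (t i) = if s i = t i then (1:ℂ) else 0 := by
    intro i hi
    simp only [Finset.mem_sdiff, Finset.mem_singleton] at hi
    rw [if_neg hi.2, Matrix.one_apply]
  rw [Finset.prod_congr rfl h1, Finset.prod_boole, if_pos rfl, mul_comm]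
  congr 1
  simp [Finset.mem_sdiff]

lemma kron_pow (p : ℕ) (M : Fin (p + 1) → Matrix (Fin 2) (Fin 2) ℂ) (n : ℕ) :
    kron p M ^ n = kron p (fun k => M k ^ n) := by
  induction n with
  | zero => simp [kron_one]
  | succ n ih => rw [pow_succ, ih, kron_mul]; simp [pow_succ]

lemma prod_map_kronPX (p : ℕ) (l : List (Fin (p + 1) → ℕ)) :
    (l.map (fun f => kron p (fun k => PX ^ f k))).prod =
      kron p (fun k => PX ^ (l.map (fun f => f k)).sum) := by
  induction l with
  | nil => simp [kron_one]
  | cons f l ih => simp [ih, kron_mul, pow_add]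

lemma vop_eq_kron (p : ℕ) (j : Fin p) :
    vop p j = kron p (fun k =>
      PX ^ ((if k = j.castSucc then 1 else 0) + (if k = j.succ then 1 else 0))) := by
  have hne : j.castSucc ≠ j.succ := by
    simp [Fin.ext_iff]
  rw [vop, site_eq_kron, site_eq_kron, kron_mul]
  refine congrArg (kron p) ?_
  funext k
  by_cases h1 : k = j.castSucc
  · simp [h1, hne, pow_add]
  · by_cases h2 : k = j.succ
    · simp [h1, h2, pow_add]
    · simp [h1, h2]

lemma sum_ind1 (p : ℕ) (g : Fin p → ℕ) (k : Fin (p + 1)) :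
    (∑ j : Fin p, (if k = j.castSucc then 1 else 0) * g j) =
      if h : (k : ℕ) < p then g ⟨k, h⟩ else 0 := by
  split_ifs with h
  · rw [Finset.sum_eq_single (⟨(k : ℕ), h⟩ : Fin p)]
    · rw [if_pos (by simp [Fin.ext_iff]), one_mul]
    · intro j _ hj
      rw [if_neg, zero_mul]
      intro e
      exact hj (by simp [Fin.ext_iff] at e ⊢; omega)
    · simp
  · apply Finset.sum_eq_zero
    intro j _
    rw [if_neg, zero_mul]
    intro e
    rw [Fin.ext_iff] at e
    simp at e
    omega

lemma sum_ind2 (p : ℕ) (g : Fin p → ℕ) (k : Fin (p + 1)) :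
    (∑ j : Fin p, (if k = j.succ then 1 else 0) * g j) =
      if h : 0 < (k : ℕ) then g ⟨(k : ℕ) - 1, by have := k.isLt; omega⟩ else 0 := by
  split_ifs with h
  · rw [Finset.sum_eq_single (⟨(k : ℕ) - 1, by have := k.isLt; omega⟩ : Fin p)]
    · rw [if_pos, one_mul]
      simp [Fin.ext_iff]
      omega
    · intro j _ hj
      rw [if_neg, zero_mul]
      intro e
      refine hj ?_
      rw [Fin.ext_iff] at e ⊢
      simp at e ⊢
      omega
    · simp
  · apply Finset.sum_eq_zero
    intro j _
    rw [if_neg, zero_mul]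
    intro e
    rw [Fin.ext_iff] at e
    simp at e
    omega

lemma prod_ofFn_kronPX (p n : ℕ) (F : Fin n → Fin (p + 1) → ℕ) :
    (List.ofFn fun j => kron p (fun k => PX ^ F j k)).prod =
      kron p (fun k => PX ^ ∑ j, F j k) := by
  have h : (List.ofFn fun j => kron p (fun k => PX ^ F j k)) =
      (List.ofFn F).map (fun f => kron p (fun k => PX ^ f k)) := by
    rw [List.map_ofFn]; rfl
  rw [h, prod_map_kronPX]
  refine congrArg (kron p) (funext fun k => ?_)
  congr 1
  rw [List.map_ofFn, List.sum_ofFn]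
  rfl


/-- Noughts-and-crosses model: for `x : {1,…,p} → ZMod 2` with `x_{p+1} := 0`,
`∏_{j=1}^{p} v_j^{x_j} = ⨂_{k=0}^{p} X^{c_k}` where `c_0 = x_1` and
`c_k = x_k + x_{k+1}` for `1 ≤ k ≤ p`. -/
theorem vertex_operators_product (p : ℕ) (hp : 1 ≤ p) (x : ℕ → ZMod 2)
    (hx : x (p + 1) = 0) :
    (List.ofFn fun j : Fin p => vop p j ^ (x ((j : ℕ) + 1)).val).prod =
      kron p (fun k =>
        PX ^ (if (k : ℕ) = 0 then x 1 else x (k : ℕ) + x ((k : ℕ) + 1)).val) := by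
  have hv : (fun j : Fin p => vop p j ^ (x ((j : ℕ) + 1)).val) =
      fun j : Fin p => kron p (fun k =>
        PX ^ (((if k = j.castSucc then 1 else 0) + (if k = j.succ then 1 else 0))
          * (x ((j : ℕ) + 1)).val)) := by
    funext j
    rw [vop_eq_kron, kron_pow]
    refine congrArg (kron p) (funext fun k => ?_)
    rw [← pow_mul]
  rw [hv, prod_ofFn_kronPX]
  refine congrArg (kron p) (funext fun k => ?_)
  simp only [add_mul, Finset.sum_add_distrib, sum_ind1, sum_ind2]
  by_cases h0 : (k : ℕ) = 0
  · rw [dif_pos (by omega : (k : ℕ) < p), dif_neg (by omega), if_pos h0, add_zero]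
    congr 2
    simp [h0]
  · by_cases hlt : (k : ℕ) < p
    · rw [dif_pos hlt, dif_pos (by omega), if_neg h0]
      have h1 : (k : ℕ) - 1 + 1 = (k : ℕ) := by omega
      simp only [Fin.val_mk, h1]
      rw [PX_pow_mod, ZMod.val_add, Nat.add_comm]
    · have hk : (k : ℕ) = p := by have := k.isLt; omega
      rw [dif_neg (by omega), dif_pos (by omega), if_neg h0, zero_add]
      have h1 : (k : ℕ) - 1 + 1 = (k : ℕ) := by omega
      have h2 : x ((k : ℕ) + 1) = 0 := by rw [hk]; exact hx
      simp only [Fin.val_mk, h1, h2, add_zero]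
end
end
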